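/- Let (X,d) be a metric space. The following are equivalent: (a) (X,d) is complete; (b) for every metric space (Y,ρ) and every continuous function f : (X,d) → (Y,ρ), the family of subsets of X on which f is Cauchy continuous forms a bornology; (c) for every continuous function f : (X,d) → ℝ, the family of subsets of X on which f is Cauchy continuous forms a bornology (equivalently, is closed under finite unions). -/

import Mathlib

universe u v

/-- `f` is Cauchy continuous on `B` if it maps Cauchy sequences contained in `B` to Cauchy
sequences. -/
def CauchyContOn {X : Type u} {Y : Type v} [MetricSpace X] [MetricSpace Y]
    (f : X → Y) (B : Set X) : Prop :=
  ∀ u : ℕ → X, (∀ n, u n ∈ B) → CauchySeq u → CauchySeq (f ∘ u)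

/-- A family of nonempty subsets of `X` is a bornology if it covers `X`, is hereditary
(closed under taking nonempty subsets) and is closed under finite unions. -/
def IsBornologyFam {X : Type u} (𝓑 : Set (Set X)) : Prop :=
  (∀ x : X, ∃ B ∈ 𝓑, x ∈ B) ∧
  (∀ A B : Set X, B ∈ 𝓑 → A ⊆ B → A.Nonempty → A ∈ 𝓑) ∧
  (∀ A B : Set X, A ∈ 𝓑 → B ∈ 𝓑 → A ∪ B ∈ 𝓑)

open Metric Filter Set Topology

set_option linter.unusedSectionVars false

section Aux

variable {X : Type u} [MetricSpace X]

/-- A Cauchy sequence with no limit has infinite range. -/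
lemma range_infinite_of_cauchy_not_tendsto {u : ℕ → X} (hu : CauchySeq u)
    (hdiv : ∀ a : X, ¬ Tendsto u atTop (𝓝 a)) : (Set.range u).Infinite := by
  by_contra hinf
  rw [Set.not_infinite] at hinf
  have hfin := hinf
  have : Finite (Set.range u) := hfin.to_subtype
  obtain ⟨z, hz⟩ := Finite.exists_infinite_fiber
    (fun n => (⟨u n, Set.mem_range_self n⟩ : Set.range u))
  have hset : {n : ℕ | u n = z.1}.Infinite := by
    have h' := Set.infinite_coe_iff.mp hz
    refine h'.mono ?_
    intro n hn
    simp only [Set.mem_preimage, Set.mem_singleton_iff] at hn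
    exact congrArg Subtype.val hn
  refine hdiv z.1 (Metric.tendsto_atTop.mpr ?_)
  intro ε hε
  obtain ⟨N, hN⟩ := Metric.cauchySeq_iff.mp hu ε hε
  obtain ⟨n₀, hn₀, hn₀N⟩ := hset.exists_gt N
  refine ⟨N, fun m hm => ?_⟩
  have := hN m hm n₀ (le_of_lt hn₀N)
  rwa [hn₀] at this

/-- From a sequence with infinite range one can extract a subsequence with pairwise
distinct values. -/
lemma exists_injective_subseq {u : ℕ → X} (h : (Set.range u).Infinite) :
    ∃ φ : ℕ → ℕ, StrictMono φ ∧ Function.Injective (u ∘ φ) := by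
  have key : ∀ m : ℕ, ∃ n, m < n ∧ u n ∉ u '' Set.Iic m := by
    intro m
    have hfin : (u '' Set.Iic m).Finite := (Set.finite_Iic m).image u
    have hinf : (Set.range u \ u '' Set.Iic m).Infinite := h.diff hfin
    obtain ⟨y, hy⟩ := hinf.nonempty
    obtain ⟨n, rfl⟩ := hy.1
    refine ⟨n, ?_, hy.2⟩
    by_contra hn
    exact hy.2 ⟨n, by simpa using Nat.le_of_not_lt hn, rfl⟩
  choose g hg1 hg2 using key
  set φ : ℕ → ℕ := fun k => Nat.rec 0 (fun _ prev => g prev) k with hφ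
  have hstep : ∀ k, φ (k + 1) = g (φ k) := fun k => rfl
  have hmono : StrictMono φ := strictMono_nat_of_lt_succ fun k => by
    rw [hstep]; exact hg1 (φ k)
  refine ⟨φ, hmono, ?_⟩
  have hne : ∀ k l, k < l → u (φ k) ≠ u (φ l) := by
    intro k l hkl he
    obtain ⟨j, rfl⟩ : ∃ j, l = j + 1 := ⟨l - 1, by omega⟩
    have hmem : u (φ k) ∈ u '' Set.Iic (φ j) :=
      ⟨φ k, hmono.monotone (Nat.lt_succ_iff.mp hkl), rfl⟩
    rw [he, hstep] at hmem
    exact hg2 (φ j) hmem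
  intro a b hab
  by_contra hne'
  rcases Nat.lt_or_ge a b with hlt | hge
  · exact hne a b hlt hab
  · exact hne b a (lt_of_le_of_ne hge (Ne.symm hne')) hab.symm

/-- If a Cauchy sequence has a subset of its range accumulating at `x` (with `x` not in that
subset), the whole sequence converges to `x`. -/
lemma tendsto_of_infDist_zero {u : ℕ → X} (hu : CauchySeq u) {S : Set X}
    (hS : S ⊆ Set.range u) (hSne : S.Nonempty) {x : X} (hx : x ∉ S)
    (h0 : infDist x S = 0) : Tendsto u atTop (𝓝 x) := by
  classical
  have key : ∀ ε > (0 : ℝ), ∀ N : ℕ, ∃ n ≥ N, dist x (u n) < ε := by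
    intro ε hε N
    set F : Finset ℕ := (Finset.range N).filter (fun j => u j ≠ x) with hF
    set T : Finset ℝ := insert ε (F.image fun j => dist x (u j)) with hT
    have hTne : T.Nonempty := ⟨ε, Finset.mem_insert_self _ _⟩
    set δ := T.min' hTne with hδ
    have hδpos : 0 < δ := by
      rw [hδ, Finset.lt_min'_iff]
      intro b hb
      rw [hT, Finset.mem_insert] at hb
      rcases hb with rfl | hb
      · exact hε
      · obtain ⟨j, hj, rfl⟩ := Finset.mem_image.mp hb
        rw [hF, Finset.mem_filter] at hj
        exact dist_pos.mpr (Ne.symm hj.2)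
    have hδε : δ ≤ ε := Finset.min'_le T ε (Finset.mem_insert_self _ _)
    have hlt : infDist x S < δ := by rw [h0]; exact hδpos
    obtain ⟨s, hsS, hs⟩ := (infDist_lt_iff hSne).mp hlt
    obtain ⟨i, rfl⟩ := hS hsS
    have hnex : u i ≠ x := fun h => hx (h ▸ hsS)
    by_cases hi : i < N
    · exfalso
      have hmem : dist x (u i) ∈ T := by
        rw [hT, Finset.mem_insert]
        exact Or.inr (Finset.mem_image.mpr ⟨i, by
          rw [hF, Finset.mem_filter]; exact ⟨Finset.mem_range.mpr hi, hnex⟩, rfl⟩)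
      exact absurd hs (not_lt.mpr (Finset.min'_le T _ hmem))
    · exact ⟨i, Nat.le_of_not_lt hi, lt_of_lt_of_le hs hδε⟩
  rw [Metric.tendsto_atTop]
  intro ε hε
  obtain ⟨N, hN⟩ := Metric.cauchySeq_iff.mp hu (ε / 2) (by positivity)
  obtain ⟨n, hn, hdn⟩ := key (ε / 2) (by positivity) N
  refine ⟨N, fun m hm => ?_⟩
  calc dist (u m) x ≤ dist (u m) (u n) + dist (u n) x := dist_triangle _ _ _
    _ < ε / 2 + ε / 2 := add_lt_add (hN m hm n hn) (by rwa [dist_comm] at hdn)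
    _ = ε := by ring

end Aux

theorem complete_iff_cauchyContOn_bornology {X : Type u} [MetricSpace X] :
    List.TFAE
      [CompleteSpace X,
       ∀ (Y : Type v) [MetricSpace Y] (f : X → Y), Continuous f →
         IsBornologyFam {B : Set X | B.Nonempty ∧ CauchyContOn f B},
       ∀ f : X → ℝ, Continuous f →
         IsBornologyFam {B : Set X | B.Nonempty ∧ CauchyContOn f B}] := by
  tfae_have 1 → 2 := by
    intro h Y _ f hf
    have hall : ∀ B : Set X, CauchyContOn f B := by
      intro B w _ hw
      obtain ⟨x, hx⟩ := cauchySeq_tendsto_of_complete hw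
      exact ((hf.tendsto x).comp hx).cauchySeq
    refine ⟨fun x => ⟨{x}, ⟨Set.singleton_nonempty x, hall _⟩, Set.mem_singleton x⟩,
           fun A B _ _ hA => ⟨hA, hall A⟩,
           fun A B hA _ => ⟨hA.1.mono Set.subset_union_left, hall _⟩⟩
  tfae_have 2 → 3 := by
    intro h f hf
    have h2 := h (ULift.{v} ℝ) (fun x => ULift.up (f x)) (continuous_uliftUp.comp hf)
    have hcs : ∀ g : ℕ → ℝ, CauchySeq g ↔ CauchySeq (fun n => ULift.up.{v} (g n)) := by
      intro g
      rw [Metric.cauchySeq_iff, Metric.cauchySeq_iff]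
      exact Iff.rfl
    have hset : {B : Set X | B.Nonempty ∧ CauchyContOn f B}
        = {B : Set X | B.Nonempty ∧ CauchyContOn (fun x => ULift.up.{v} (f x)) B} := by
      ext B
      simp only [Set.mem_setOf_eq, CauchyContOn]
      refine and_congr_right fun _ => forall_congr' fun w => imp_congr_right fun _ =>
        imp_congr_right fun _ => ?_
      simp only [Function.comp_def]
      exact hcs fun n => f (w n)
    rw [hset]
    exact h2
  tfae_have 3 → 1 := by
    intro h3
    by_contra hnc
    have hnot : ¬ ∀ u : ℕ → X, CauchySeq u → ∃ a, Tendsto u atTop (𝓝 a) :=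
      fun H => hnc (Metric.complete_of_cauchySeq_tendsto H)
    push_neg at hnot
    obtain ⟨u, hu, hdiv⟩ := hnot
    obtain ⟨φ, hφ, hinj⟩ := exists_injective_subseq
      (range_infinite_of_cauchy_not_tendsto hu hdiv)
    set v : ℕ → X := u ∘ φ with hv
    have hvc : CauchySeq v := hu.comp_tendsto hφ.tendsto_atTop
    set A : Set X := Set.range (fun k => v (2 * k)) with hA
    set B : Set X := Set.range (fun k => v (2 * k + 1)) with hB
    have hAu : A ⊆ Set.range u := by
      rintro y ⟨k, rfl⟩; exact ⟨φ (2 * k), rfl⟩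
    have hBu : B ⊆ Set.range u := by
      rintro y ⟨k, rfl⟩; exact ⟨φ (2 * k + 1), rfl⟩
    have hAne : A.Nonempty := ⟨v 0, 0, rfl⟩
    have hBne : B.Nonempty := ⟨v 1, 0, rfl⟩
    have hABdisj : ∀ y, y ∈ A → y ∉ B := by
      rintro y ⟨k, rfl⟩ ⟨j, hj⟩
      have := hinj hj.symm
      omega
    have key : ∀ x : X, infDist x A = 0 → infDist x B = 0 → False := by
      intro x h1 h2
      by_cases hxA : x ∈ A
      · exact hdiv x (tendsto_of_infDist_zero hu hBu hBne (hABdisj x hxA) h2)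
      · exact hdiv x (tendsto_of_infDist_zero hu hAu hAne hxA h1)
    have hden : ∀ x : X, 0 < infDist x A + infDist x B := by
      intro x
      by_contra hc
      push_neg at hc
      have hA0 : infDist x A = 0 :=
        le_antisymm (by linarith [infDist_nonneg (x := x) (s := B)]) infDist_nonneg
      have hB0 : infDist x B = 0 :=
        le_antisymm (by linarith [infDist_nonneg (x := x) (s := A)]) infDist_nonneg
      exact key x hA0 hB0
    set f : X → ℝ := fun x => infDist x A / (infDist x A + infDist x B) with hf
    have hfc : Continuous f :=
      (continuous_infDist_pt A).div ((continuous_infDist_pt A).add (continuous_infDist_pt B))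
        fun x => (hden x).ne'
    have hfA : ∀ a ∈ A, f a = 0 := by
      intro a ha
      simp [hf, infDist_zero_of_mem ha]
    have hfB : ∀ b ∈ B, f b = 1 := by
      intro b hb
      have h2 : infDist b B = 0 := infDist_zero_of_mem hb
      have h1 : infDist b A ≠ 0 := fun h => key b h h2
      rw [hf]
      simp only [h2, add_zero]
      exact div_self h1
    obtain ⟨-, -, hun⟩ := h3 f hfc
    have hAmem : A ∈ {B : Set X | B.Nonempty ∧ CauchyContOn f B} := by
      refine ⟨hAne, fun w hw _ => ?_⟩
      have : f ∘ w = fun _ => 0 := funext fun n => hfA _ (hw n)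
      rw [this]
      exact tendsto_const_nhds.cauchySeq
    have hBmem : B ∈ {B : Set X | B.Nonempty ∧ CauchyContOn f B} := by
      refine ⟨hBne, fun w hw _ => ?_⟩
      have : f ∘ w = fun _ => 1 := funext fun n => hfB _ (hw n)
      rw [this]
      exact tendsto_const_nhds.cauchySeq
    have hUmem := hun A B hAmem hBmem
    have hvm : ∀ n, v n ∈ A ∪ B := by
      intro n
      rcases Nat.even_or_odd n with ⟨k, hk⟩ | ⟨k, hk⟩
      · exact Or.inl ⟨k, congrArg v (by omega)⟩
      · exact Or.inr ⟨k, congrArg v (by omega)⟩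
    have hcc := hUmem.2 v hvm hvc
    rw [Metric.cauchySeq_iff] at hcc
    obtain ⟨N, hN⟩ := hcc 1 one_pos
    have hcontra := hN (2 * N) (by omega) (2 * N + 1) (by omega)
    have e1 : (f ∘ v) (2 * N) = 0 := hfA _ ⟨N, rfl⟩
    have e2 : (f ∘ v) (2 * N + 1) = 1 := hfB _ ⟨N, rfl⟩
    rw [e1, e2] at hcontra
    norm_num [Real.dist_eq] at hcontra
  tfae_finish
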